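/- Let f and g be q-linearized polynomials over F_{q^m} of q-degree at most k-1, with k ≤ ℓ, and let α_1,…,α_ℓ ∈ F_{q^m} be linearly independent over F_q. If f ≠ g, then the subspaces E(f) = span{(α_i, f(α_i)) : 1 ≤ i ≤ ℓ} and E(g) = span{(α_i, g(α_i)) : 1 ≤ i ≤ ℓ} of F_q^ℓ × F_{q^m} satisfy dim(E(f) ∩ E(g)) ≤ k - 1. -/

import Mathlib

open Polynomial

section aux
variable (K L : Type*) [Field K] [Fintype K] [Field L] [Algebra K L]

/-- `x ↦ x ^ q ^ j` as a `K`-linear map on `L`. -/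
noncomputable def qpowLM (j : ℕ) : L →ₗ[K] L where
  toFun x := x ^ (Fintype.card K) ^ j
  map_add' x y := by
    obtain ⟨p, hp⟩ := CharP.exists K
    haveI := hp
    obtain ⟨n, hpn, hcard⟩ := FiniteField.card K p
    haveI : Fact p.Prime := ⟨hpn⟩
    haveI : CharP L p := charP_of_injective_algebraMap (algebraMap K L).injective p
    rw [hcard, ← pow_mul]
    exact add_pow_char_pow ..
  map_smul' c x := by
    simp only [Algebra.smul_def, RingHom.id_apply, mul_pow, ← map_pow,
      FiniteField.pow_card_pow]
end aux



/-- The Kötter–Kschischang codeword associated with the `q`-linearized polynomial with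
coefficient vector `a`: the `F_q`-span of `{(α_i, f(α_i)) : 1 ≤ i ≤ ℓ}` where
`f(x) = Σ_j a_j x^{q^j}`. -/
noncomputable def KKword (K L : Type*) [Field K] [Fintype K] [Field L] [Algebra K L]
    (k ℓ : ℕ) (α : Fin ℓ → L) (a : Fin k → L) : Submodule K (L × L) :=
  Submodule.span K (Set.range fun i : Fin ℓ =>
    ((α i, ∑ j : Fin k, a j * α i ^ (Fintype.card K) ^ (j : ℕ)) : L × L))

/-- Distinct `q`-linearized polynomials of `q`-degree at most `k-1` yield codewords
intersecting in dimension at most `k - 1`. -/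
theorem stmt3 (K L : Type*) [Field K] [Fintype K] [Field L] [Algebra K L]
    [FiniteDimensional K L] (k ℓ : ℕ) (hk : 1 ≤ k) (hkl : k ≤ ℓ)
    (α : Fin ℓ → L) (hα : LinearIndependent K α)
    (a b : Fin k → L) (hab : a ≠ b) :
    Module.finrank K ↥(KKword K L k ℓ α a ⊓ KKword K L k ℓ α b) ≤ k - 1 := by
  classical
  unfold KKword
  set q := Fintype.card K with hq
  have hq1 : 1 < q := Fintype.one_lt_card
  -- linear maps
  set Fa : L →ₗ[K] L := ∑ j : Fin k, a j • qpowLM K L (j : ℕ) with hFa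
  set Fb : L →ₗ[K] L := ∑ j : Fin k, b j • qpowLM K L (j : ℕ) with hFb
  have hFa' : ∀ x : L, Fa x = ∑ j : Fin k, a j * x ^ q ^ (j : ℕ) := by
    intro x; simp [hFa, qpowLM, LinearMap.sum_apply, smul_eq_mul]; rfl
  have hFb' : ∀ x : L, Fb x = ∑ j : Fin k, b j * x ^ q ^ (j : ℕ) := by
    intro x; simp [hFb, qpowLM, LinearMap.sum_apply, smul_eq_mul]; rfl
  set D : L →ₗ[K] L := Fa - Fb with hD
  set Ta : L →ₗ[K] L × L := LinearMap.prod LinearMap.id Fa with hTa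
  -- intersection is contained in image of ker D
  have hle : (Submodule.span K (Set.range fun i : Fin ℓ =>
      ((α i, ∑ j : Fin k, a j * α i ^ q ^ (j : ℕ)) : L × L)) ⊓
      Submodule.span K (Set.range fun i : Fin ℓ =>
      ((α i, ∑ j : Fin k, b j * α i ^ q ^ (j : ℕ)) : L × L))) ≤
      (LinearMap.ker D).map Ta := by
    have hma : Submodule.span K (Set.range fun i : Fin ℓ =>
        ((α i, ∑ j : Fin k, a j * α i ^ q ^ (j : ℕ)) : L × L)) =
        (Submodule.span K (Set.range α)).map Ta := by
      rw [Submodule.map_span, ← Set.range_comp]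
      congr 1
      ext v
      simp [hTa, hFa']
    have hmb : Submodule.span K (Set.range fun i : Fin ℓ =>
        ((α i, ∑ j : Fin k, b j * α i ^ q ^ (j : ℕ)) : L × L)) =
        (Submodule.span K (Set.range α)).map (LinearMap.prod LinearMap.id Fb) := by
      rw [Submodule.map_span, ← Set.range_comp]
      congr 1
      ext v
      simp [hFb']
    rw [hma, hmb]
    rintro v ⟨⟨x, hx, rfl⟩, ⟨y, hy, hxy⟩⟩
    have hxy1 : y = x := congrArg Prod.fst hxy
    subst hxy1
    have hxy2 : Fb y = Fa y := congrArg Prod.snd hxy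
    exact ⟨y, by simp [hD, LinearMap.mem_ker, hxy2], rfl⟩
  refine le_trans (le_trans (Submodule.finrank_mono hle)
    (Submodule.finrank_map_le Ta (LinearMap.ker D))) ?_
  -- now bound finrank of ker D
  -- the polynomial
  set c : Fin k → L := fun j => a j - b j with hc
  have hcne : c ≠ 0 := sub_ne_zero.mpr hab
  set P : L[X] := ∑ j : Fin k, C (c j) * X ^ q ^ (j : ℕ) with hP
  have hPne : P ≠ 0 := by
    obtain ⟨j0, hj0⟩ := Function.ne_iff.mp hcne
    intro h
    apply hj0
    have := congrArg (fun Q => Polynomial.coeff Q (q ^ (j0 : ℕ))) h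
    simp only [hP, Polynomial.finset_sum_coeff, Polynomial.coeff_C_mul,
      Polynomial.coeff_X_pow, Polynomial.coeff_zero] at this
    rw [Finset.sum_eq_single j0] at this
    · simpa using this
    · intro j _ hj
      have : q ^ (j : ℕ) ≠ q ^ (j0 : ℕ) := fun h' => hj (Fin.ext
        (Nat.pow_right_injective hq1 h'))
      rw [if_neg (fun h' => this h'.symm), mul_zero]
    · simp
  have hPdeg : P.natDegree ≤ q ^ (k - 1) := by
    refine Polynomial.natDegree_sum_le_of_forall_le _ _ fun j _ => ?_
    calc (C (c j) * X ^ q ^ (j : ℕ)).natDegree ≤ q ^ (j : ℕ) :=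
          (Polynomial.natDegree_C_mul_le (c j) (X ^ q ^ (j : ℕ))).trans (by simp)
      _ ≤ q ^ (k - 1) := Nat.pow_le_pow_right (le_of_lt hq1)
          (Nat.le_sub_one_of_lt j.isLt)
  -- ker D ⊆ roots of P
  have hker : ∀ x ∈ LinearMap.ker D, P.IsRoot x := by
    intro x hx
    have : Fa x - Fb x = 0 := hx
    have heval : P.eval x = Fa x - Fb x := by
      simp [hP, hFa', hFb', hc, Polynomial.eval_finset_sum, sub_mul,
        Finset.sum_sub_distrib]
    simp [Polynomial.IsRoot, heval, this]
  haveI : Finite L := Module.finite_iff_finite.mp ‹FiniteDimensional K L›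
  haveI : Fintype L := Fintype.ofFinite L
  -- card bound
  have hcard : Nat.card ↥(LinearMap.ker D) ≤ q ^ (k - 1) := by
    have hinj : Function.Injective (fun x : ↥(LinearMap.ker D) =>
        (⟨x.1, Multiset.mem_toFinset.mpr ((Polynomial.mem_roots hPne).mpr
          (hker x.1 x.2))⟩ : ↥P.roots.toFinset)) := by
      intro x y h
      have h2 := congrArg Subtype.val h
      exact Subtype.ext h2
    calc Nat.card ↥(LinearMap.ker D) ≤ Nat.card ↥P.roots.toFinset :=
          Nat.card_le_card_of_injective _ hinj
      _ = P.roots.toFinset.card := Nat.card_eq_finsetCard _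
      _ ≤ Multiset.card P.roots := P.roots.toFinset_card_le
      _ ≤ P.natDegree := Polynomial.card_roots' P
      _ ≤ q ^ (k - 1) := hPdeg
  have hcard2 : Nat.card ↥(LinearMap.ker D) =
      q ^ Module.finrank K ↥(LinearMap.ker D) := by
    rw [Nat.card_eq_fintype_card]
    exact Module.card_eq_pow_finrank (K := K)
  rw [hcard2] at hcard
  exact (Nat.pow_le_pow_iff_right hq1).mp hcard
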